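/- Let r, m, s be positive integers and let q be a twice differentiable real function on an open interval I with I ∩ {0,1} = ∅ such that q(t) ∉ {0, 1, t} on I. If q satisfies the Riccati equation q′ = (1/(t(t−1)))·((b₄−b₃)q² + (2b₁t + b₂ − b₄ − 1)q − (b₁+b₂)t) on I, then q solves P_VI(α, β, γ, δ) on I with α = r²/2, β = −(m+s)²/2, γ = (r−s+1)²/2, δ = (1−m²)/2. -/

import Mathlib

/-- The right-hand side of the Painlevé VI equation `P_VI(α,β,γ,δ)` for a function `q`
with derivative `q'`, at the point `t`. -/
noncomputable def pviRHS (α β γ δ : ℝ) (q q' : ℝ → ℝ) (t : ℝ) : ℝ :=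
  (1 / 2) * (1 / q t + 1 / (q t - 1) + 1 / (q t - t)) * (q' t) ^ 2
    - (1 / t + 1 / (t - 1) + 1 / (q t - t)) * q' t
    + (q t * (q t - 1) * (q t - t) / (t ^ 2 * (t - 1) ^ 2)) *
        (α + β * t / (q t) ^ 2 + γ * (t - 1) / (q t - 1) ^ 2
          + δ * t * (t - 1) / (q t - t) ^ 2)

set_option maxHeartbeats 2000000 in
private lemma pvi_alg (R M S t x F : ℝ) (ht0 : t ≠ 0) (ht1 : t - 1 ≠ 0)
    (hx0 : x ≠ 0) (hx1 : x - 1 ≠ 0) (hxt : x - t ≠ 0)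
    (hF : F = (t * (t - 1))⁻¹ * (-R * x ^ 2 + ((M + R + 1) * t + (S - 1)) * x - (M + S) * t)) :
    (-(2 * t - 1) / (t * (t - 1)) ^ 2) * (-R * x ^ 2 + ((M + R + 1) * t + (S - 1)) * x - (M + S) * t)
      + (t * (t - 1))⁻¹ * (-R * (2 * x * F) + ((M + R + 1) * x + ((M + R + 1) * t + (S - 1)) * F) - (M + S))
    = (1 / 2) * (1 / x + 1 / (x - 1) + 1 / (x - t)) * F ^ 2
      - (1 / t + 1 / (t - 1) + 1 / (x - t)) * F
      + (x * (x - 1) * (x - t) / (t ^ 2 * (t - 1) ^ 2)) *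
          (R ^ 2 / 2 + (-(M + S) ^ 2 / 2) * t / x ^ 2 + ((R - S + 1) ^ 2 / 2) * (t - 1) / (x - 1) ^ 2
            + ((1 - M ^ 2) / 2) * t * (t - 1) / (x - t) ^ 2) := by
  subst hF
  field_simp
  ring

/-- Any solution of the Riccati equation
`q′ = (1/(t(t−1)))((b₄−b₃)q² + (2b₁t+b₂−b₄−1)q − (b₁+b₂)t)` with
`b₁ = (m+r+1)/2`, `b₂ = (m−r+2s−1)/2`, `b₃ = (r+m−1)/2`, `b₄ = (m−r−1)/2`
solves `P_VI(r²/2, −(m+s)²/2, (r−s+1)²/2, (1−m²)/2)`. -/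
theorem statement3 (r m s : ℕ) (hr : 0 < r) (hm : 0 < m) (hs : 0 < s)
    (a b : ℝ) (hI : Set.Ioo a b ∩ {0, 1} = ∅)
    (q q' q'' : ℝ → ℝ)
    (hq : ∀ t ∈ Set.Ioo a b, HasDerivAt q (q' t) t)
    (hq' : ∀ t ∈ Set.Ioo a b, HasDerivAt q' (q'' t) t)
    (hne : ∀ t ∈ Set.Ioo a b, q t ≠ 0 ∧ q t ≠ 1 ∧ q t ≠ t)
    (hric : ∀ t ∈ Set.Ioo a b,
      q' t = (1 / (t * (t - 1))) *
        (((((m : ℝ) - r - 1) / 2) - (((r : ℝ) + m - 1) / 2)) * (q t) ^ 2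
          + (2 * (((m : ℝ) + r + 1) / 2) * t + (((m : ℝ) - r + 2 * s - 1) / 2)
              - (((m : ℝ) - r - 1) / 2) - 1) * q t
          - ((((m : ℝ) + r + 1) / 2) + (((m : ℝ) - r + 2 * s - 1) / 2)) * t)) :
    ∀ t ∈ Set.Ioo a b,
      q'' t = pviRHS ((r : ℝ) ^ 2 / 2) (-((m : ℝ) + s) ^ 2 / 2) (((r : ℝ) - s + 1) ^ 2 / 2)
        ((1 - (m : ℝ) ^ 2) / 2) q q' t := by
  have h0 : (0 : ℝ) ∉ Set.Ioo a b := fun h =>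
    Set.eq_empty_iff_forall_notMem.mp hI 0 ⟨h, by simp⟩
  have h1' : (1 : ℝ) ∉ Set.Ioo a b := fun h =>
    Set.eq_empty_iff_forall_notMem.mp hI 1 ⟨h, by simp⟩
  have hric' : ∀ u ∈ Set.Ioo a b,
      q' u = (u * (u - 1))⁻¹ *
        (-(r : ℝ) * (q u) ^ 2 + (((m : ℝ) + r + 1) * u + ((s : ℝ) - 1)) * q u
          - ((m : ℝ) + s) * u) := by
    intro u hu
    rw [hric u hu]
    have hu0 : u ≠ 0 := fun h => h0 (h ▸ hu)
    have hu1 : u - 1 ≠ 0 := sub_ne_zero.mpr fun h => h1' (h ▸ hu)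
    field_simp
    ring
  intro t ht
  have ht0 : t ≠ 0 := fun h => h0 (h ▸ ht)
  have ht1 : t ≠ 1 := fun h => h1' (h ▸ ht)
  have ht1' : t - 1 ≠ 0 := sub_ne_zero.mpr ht1
  have hden : t * (t - 1) ≠ 0 := mul_ne_zero ht0 ht1'
  obtain ⟨hq0, hq1, hqt⟩ := hne t ht
  have hq1' : q t - 1 ≠ 0 := sub_ne_zero.mpr hq1
  have hqt' : q t - t ≠ 0 := sub_ne_zero.mpr hqt
  have hqd := hq t ht
  have h1 : HasDerivAt (fun u : ℝ => u * (u - 1)) (2 * t - 1) t := by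
    have := (hasDerivAt_id t).mul ((hasDerivAt_id t).sub_const 1)
    refine this.congr_deriv ?_
    simp only [id]
    ring
  have hinv : HasDerivAt (fun u : ℝ => (u * (u - 1))⁻¹)
      (-(2 * t - 1) / (t * (t - 1)) ^ 2) t := h1.inv hden
  have h2 : HasDerivAt
      (fun u : ℝ => -(r : ℝ) * (q u) ^ 2 + (((m : ℝ) + r + 1) * u + ((s : ℝ) - 1)) * q u
        - ((m : ℝ) + s) * u)
      (-(r : ℝ) * (2 * q t * q' t) + (((m : ℝ) + r + 1) * q t
        + (((m : ℝ) + r + 1) * t + ((s : ℝ) - 1)) * q' t) - ((m : ℝ) + s)) t := by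
    have ha : HasDerivAt (fun u : ℝ => -(r : ℝ) * (q u) ^ 2)
        (-(r : ℝ) * (2 * q t * q' t)) t := by
      have := (hqd.pow 2).const_mul (-(r : ℝ))
      refine this.congr_deriv ?_
      ring
    have hb : HasDerivAt (fun u : ℝ => (((m : ℝ) + r + 1) * u + ((s : ℝ) - 1)) * q u)
        (((m : ℝ) + r + 1) * q t + (((m : ℝ) + r + 1) * t + ((s : ℝ) - 1)) * q' t) t := by
      have hlin : HasDerivAt (fun u : ℝ => ((m : ℝ) + r + 1) * u + ((s : ℝ) - 1))
          ((m : ℝ) + r + 1) t := by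
        simpa using ((hasDerivAt_id t).const_mul ((m : ℝ) + r + 1)).add_const ((s : ℝ) - 1)
      exact hlin.mul hqd
    have hc : HasDerivAt (fun u : ℝ => ((m : ℝ) + s) * u) ((m : ℝ) + s) t := by
      simpa using (hasDerivAt_id t).const_mul ((m : ℝ) + s)
    exact (ha.add hb).sub hc
  have hG : HasDerivAt
      (fun u : ℝ => (u * (u - 1))⁻¹ *
        (-(r : ℝ) * (q u) ^ 2 + (((m : ℝ) + r + 1) * u + ((s : ℝ) - 1)) * q u
          - ((m : ℝ) + s) * u))
      ((-(2 * t - 1) / (t * (t - 1)) ^ 2) *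
          (-(r : ℝ) * (q t) ^ 2 + (((m : ℝ) + r + 1) * t + ((s : ℝ) - 1)) * q t
            - ((m : ℝ) + s) * t)
        + (t * (t - 1))⁻¹ * (-(r : ℝ) * (2 * q t * q' t) + (((m : ℝ) + r + 1) * q t
            + (((m : ℝ) + r + 1) * t + ((s : ℝ) - 1)) * q' t) - ((m : ℝ) + s))) t :=
    hinv.mul h2
  have hev : q' =ᶠ[nhds t]
      (fun u : ℝ => (u * (u - 1))⁻¹ *
        (-(r : ℝ) * (q u) ^ 2 + (((m : ℝ) + r + 1) * u + ((s : ℝ) - 1)) * q u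
          - ((m : ℝ) + s) * u)) :=
    Filter.eventuallyEq_of_mem (isOpen_Ioo.mem_nhds ht) hric'
  have hval := (hq' t ht).unique (hG.congr_of_eventuallyEq hev)
  rw [hval]
  show _ = pviRHS _ _ _ _ _ _ _
  rw [pviRHS]
  exact pvi_alg (r : ℝ) (m : ℝ) (s : ℝ) t (q t) (q' t) ht0 ht1' hq0 hq1' hqt' (hric' t ht)
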